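/- KD4_h admits the rule □Dh R: if KD4_h proves ⋀{σ_r}_{r∈R} ∧ ⋀{γ_i ∧ □_{n_i} γ_i}_{i∈I} → ⊥ and n_i < n for all i, then KD4_h proves ⋀{□n σ_r}_{r∈R} ∧ ⋀{□_{n_i} γ_i}_{i∈I} → ⊥. -/

import Mathlib

/-- Poly-modal formulas with modalities `□n` for `n : ℕ`. -/
inductive Fm : Type
  | atom : ℕ → Fm
  | bot  : Fm
  | and  : Fm → Fm → Fm
  | or   : Fm → Fm → Fm
  | imp  : Fm → Fm → Fm
  | neg  : Fm → Fm
  | box  : ℕ → Fm → Fm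
  deriving DecidableEq

def Fm.top : Fm := Fm.neg Fm.bot

/-- `i` occurs as a modality index in the formula. -/
def occursBox (i : ℕ) : Fm → Prop
  | .atom _ => False
  | .bot => False
  | .and A B => occursBox i A ∨ occursBox i B
  | .or A B => occursBox i A ∨ occursBox i B
  | .imp A B => occursBox i A ∨ occursBox i B
  | .neg A => occursBox i A
  | .box n A => i = n ∨ occursBox i A

/-- `n` is strictly greater than every modality index occurring in `A`
    (the paper's "`n > r(A)`"). -/
def BoxLt (A : Fm) (n : ℕ) : Prop := ∀ i, occursBox i A → i < n

/-- The language `L∞`: each box index strictly exceeds all box indices in its scope. -/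
inductive Linf : Fm → Prop
  | atom (k : ℕ) : Linf (.atom k)
  | bot : Linf .bot
  | and {A B : Fm} : Linf A → Linf B → Linf (.and A B)
  | or {A B : Fm} : Linf A → Linf B → Linf (.or A B)
  | imp {A B : Fm} : Linf A → Linf B → Linf (.imp A B)
  | neg {A : Fm} : Linf A → Linf (.neg A)
  | box {A : Fm} (n : ℕ) : Linf A → BoxLt A n → Linf (.box n A)

/-- Boolean evaluation treating atoms and boxed formulas as propositional atoms. -/
def evalWith (v : Fm → Bool) : Fm → Bool
  | .atom k => v (.atom k)
  | .bot => false
  | .and A B => evalWith v A && evalWith v B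
  | .or A B => evalWith v A || evalWith v B
  | .imp A B => !(evalWith v A) || evalWith v B
  | .neg A => !(evalWith v A)
  | .box n A => v (.box n A)

/-- Classical propositional tautologies (on `L∞`-formulas as atoms). -/
def Taut (A : Fm) : Prop := ∀ v, evalWith v A = true

def axH (F : Fm) : Prop := ∃ A n, Linf (Fm.box n A) ∧ F = (Fm.box n A).imp (Fm.box (n+1) A)
def axK (F : Fm) : Prop := ∃ A B n, Linf (Fm.box n (A.imp B)) ∧
    F = (Fm.box n (A.imp B)).imp ((Fm.box n A).imp (Fm.box n B))
def axFour (F : Fm) : Prop := ∃ A n, Linf (Fm.box n A) ∧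
    F = (Fm.box n A).imp (Fm.box (n+1) (Fm.box n A))
def axD (F : Fm) : Prop := ∃ n, F = Fm.neg (Fm.box n Fm.bot)
def axT (F : Fm) : Prop := ∃ A n, Linf (Fm.box n A) ∧ F = (Fm.box n A).imp A
def axL (F : Fm) : Prop := ∃ A n, Linf (Fm.box n A) ∧
    F = (Fm.box (n+1) ((Fm.box n A).imp A)).imp (Fm.box n A)
def axFive (F : Fm) : Prop := ∃ A n, Linf (Fm.box n A) ∧
    F = ((Fm.box n A).neg).imp (Fm.box (n+1) ((Fm.box n A).neg))

/-- Hilbert-style provability over `L∞` from a set of axiom (schema instances):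
    classical tautologies, modus ponens, and necessitation restricted to `n > r(A)`. -/
inductive Prv (Ax : Fm → Prop) : Fm → Prop
  | ax {A : Fm} : Ax A → Prv Ax A
  | taut {A : Fm} : Linf A → Taut A → Prv Ax A
  | mp {A B : Fm} : Prv Ax (A.imp B) → Prv Ax A → Prv Ax B
  | nec {A : Fm} (n : ℕ) : Prv Ax A → BoxLt A n → Prv Ax (Fm.box n A)

def K4hAx (F : Fm) : Prop := axH F ∨ axK F ∨ axFour F
def KD4hAx (F : Fm) : Prop := K4hAx F ∨ axD F
def S4hAx (F : Fm) : Prop := K4hAx F ∨ axT F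
def GLhAx (F : Fm) : Prop := K4hAx F ∨ axL F
def KD45hAx (F : Fm) : Prop := KD4hAx F ∨ axFive F

def K4h : Fm → Prop := Prv K4hAx
def KD4h : Fm → Prop := Prv KD4hAx
def S4h : Fm → Prop := Prv S4hAx
def GLh : Fm → Prop := Prv GLhAx

def conjList (l : List Fm) : Fm := l.foldr Fm.and Fm.top
def disjList (l : List Fm) : Fm := l.foldr Fm.or Fm.bot

/-- `Γ ⊢_L A` : some finite conjunction of members of `Γ` implies `A` in `L`. -/
def Deriv (Ax : Fm → Prop) (Γ : Set Fm) (A : Fm) : Prop :=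
  ∃ l : List Fm, (∀ B ∈ l, B ∈ Γ) ∧ Prv Ax ((conjList l).imp A)

/-! ### Auxiliary machinery -/

section Aux

lemma Linf_imp_inv {A B : Fm} (h : Linf (A.imp B)) : Linf A ∧ Linf B := by
  cases h with | imp a b => exact ⟨a, b⟩

lemma Linf_box_inv {n : ℕ} {A : Fm} (h : Linf (Fm.box n A)) : Linf A ∧ BoxLt A n := by
  cases h with | box n a b => exact ⟨a, b⟩

lemma BoxLt.mono {A : Fm} {m n : ℕ} (h : BoxLt A m) (hmn : m ≤ n) : BoxLt A n :=
  fun i hi => lt_of_lt_of_le (h i hi) hmn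

lemma BoxLt_top {n : ℕ} : BoxLt Fm.top n := fun i hi => hi.elim

lemma BoxLt_bot {n : ℕ} : BoxLt Fm.bot n := fun i hi => hi.elim

lemma BoxLt_imp {A B : Fm} {n : ℕ} (hA : BoxLt A n) (hB : BoxLt B n) :
    BoxLt (A.imp B) n := fun i hi => hi.elim (hA i) (hB i)

lemma BoxLt_and {A B : Fm} {n : ℕ} (hA : BoxLt A n) (hB : BoxLt B n) :
    BoxLt (A.and B) n := fun i hi => hi.elim (hA i) (hB i)

lemma BoxLt_box {A : Fm} {m n : ℕ} (hA : BoxLt A n) (hmn : m < n) :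
    BoxLt (Fm.box m A) n := fun i hi => hi.elim (fun h => h ▸ hmn) (hA i)

/-- Every `KD4h`-provable formula is in `L∞`. -/
lemma KD4h_linf {A : Fm} (h : Prv KD4hAx A) : Linf A := by
  induction h with
  | ax hA =>
    rcases hA with (⟨A, m, hL, rfl⟩ | ⟨A, B, m, hL, rfl⟩ | ⟨A, m, hL, rfl⟩) | ⟨m, rfl⟩
    · obtain ⟨hA, hlt⟩ := Linf_box_inv hL
      exact Linf.imp hL (Linf.box _ hA (hlt.mono (Nat.le_succ _)))
    · obtain ⟨hAB, hlt⟩ := Linf_box_inv hL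
      obtain ⟨hA, hB⟩ := Linf_imp_inv hAB
      exact Linf.imp hL (Linf.imp
        (Linf.box _ hA (fun i hi => hlt i (Or.inl hi)))
        (Linf.box _ hB (fun i hi => hlt i (Or.inr hi))))
    · obtain ⟨hA, hlt⟩ := Linf_box_inv hL
      exact Linf.imp hL (Linf.box _ hL (BoxLt_box (hlt.mono (Nat.le_succ _)) (Nat.lt_succ_self _)))
    · exact Linf.neg (Linf.box _ Linf.bot BoxLt_bot)
  | taut hL _ => exact hL
  | mp _ _ ih1 _ => exact (Linf_imp_inv ih1).2
  | nec m _ hlt ih => exact Linf.box m ih hlt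

/-- One-premise tautological consequence. -/
lemma mp1 {A B : Fm} (hB : Linf B) (t : Taut (A.imp B))
    (h : Prv KD4hAx A) : Prv KD4hAx B :=
  Prv.mp (Prv.taut (Linf.imp (KD4h_linf h) hB) t) h

/-- Two-premise tautological consequence. -/
lemma mp2 {A B C : Fm} (hC : Linf C) (t : Taut (A.imp (B.imp C)))
    (h1 : Prv KD4hAx A) (h2 : Prv KD4hAx B) : Prv KD4hAx C :=
  Prv.mp (Prv.mp (Prv.taut
    (Linf.imp (KD4h_linf h1) (Linf.imp (KD4h_linf h2) hC)) t) h1) h2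

/-- Three-premise tautological consequence. -/
lemma mp3 {A B C D : Fm} (hD : Linf D) (t : Taut (A.imp (B.imp (C.imp D))))
    (h1 : Prv KD4hAx A) (h2 : Prv KD4hAx B) (h3 : Prv KD4hAx C) : Prv KD4hAx D :=
  Prv.mp (Prv.mp (Prv.mp (Prv.taut
    (Linf.imp (KD4h_linf h1) (Linf.imp (KD4h_linf h2)
      (Linf.imp (KD4h_linf h3) hD))) t) h1) h2) h3

lemma imp_trans {A B C : Fm} (h1 : Prv KD4hAx (A.imp B)) (h2 : Prv KD4hAx (B.imp C)) :
    Prv KD4hAx (A.imp C) := by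
  obtain ⟨hA, hB⟩ := Linf_imp_inv (KD4h_linf h1)
  obtain ⟨_, hC⟩ := Linf_imp_inv (KD4h_linf h2)
  refine mp2 (Linf.imp hA hC) ?_ h1 h2
  intro v
  simp only [evalWith]
  cases evalWith v A <;> cases evalWith v B <;> cases evalWith v C <;> simp

lemma prv_id {A : Fm} (hA : Linf A) : Prv KD4hAx (A.imp A) := by
  refine Prv.taut (Linf.imp hA hA) ?_
  intro v; simp only [evalWith]; cases evalWith v A <;> simp

/-- Monotone raising of box indices via axiom `H`. -/
lemma boxUp {A : Fm} {m n : ℕ} (hm : Linf (Fm.box m A)) (h : m ≤ n) :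
    Prv KD4hAx ((Fm.box m A).imp (Fm.box n A)) := by
  obtain ⟨hA, hlt⟩ := Linf_box_inv hm
  induction n, h using Nat.le_induction with
  | base => exact prv_id hm
  | succ k hk ih =>
    have hLk : Linf (Fm.box k A) := Linf.box _ hA (hlt.mono hk)
    exact imp_trans ih (Prv.ax (Or.inl (Or.inl ⟨A, k, hLk, rfl⟩)))

/-- Distribution under a box (rule `K`). -/
lemma boxK {A B : Fm} {m : ℕ} (hlt : BoxLt (A.imp B) m) (h : Prv KD4hAx (A.imp B)) :
    Prv KD4hAx ((Fm.box m A).imp (Fm.box m B)) :=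
  Prv.mp (Prv.ax (Or.inl (Or.inr (Or.inl
    ⟨A, B, m, Linf.box _ (KD4h_linf h) hlt, rfl⟩))))
    (Prv.nec m h hlt)

/-- `□n A → □n B → □n (A ∧ B)`. -/
lemma box_and {A B : Fm} {m : ℕ} (hA : Linf (Fm.box m A)) (hB : Linf (Fm.box m B)) :
    Prv KD4hAx ((Fm.box m A).imp ((Fm.box m B).imp (Fm.box m (A.and B)))) := by
  obtain ⟨hA', hAlt⟩ := Linf_box_inv hA
  obtain ⟨hB', hBlt⟩ := Linf_box_inv hB
  have t1 : Prv KD4hAx (A.imp (B.imp (A.and B))) := by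
    refine Prv.taut (Linf.imp hA' (Linf.imp hB' (Linf.and hA' hB'))) ?_
    intro v; simp only [evalWith]; cases evalWith v A <;> cases evalWith v B <;> simp
  have h1 : Prv KD4hAx ((Fm.box m A).imp (Fm.box m (B.imp (A.and B)))) :=
    boxK (BoxLt_imp hAlt (BoxLt_imp hBlt (BoxLt_and hAlt hBlt))) t1
  have h2 : Prv KD4hAx ((Fm.box m (B.imp (A.and B))).imp
      ((Fm.box m B).imp (Fm.box m (A.and B)))) :=
    Prv.ax (Or.inl (Or.inr (Or.inl ⟨B, A.and B, m,
      Linf.box _ (Linf.imp hB' (Linf.and hA' hB'))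
        (BoxLt_imp hBlt (BoxLt_and hAlt hBlt)), rfl⟩)))
  exact imp_trans h1 h2

lemma BoxLt_conjList {l : List Fm} {m : ℕ} (h : ∀ B ∈ l, BoxLt B m) :
    BoxLt (conjList l) m := by
  induction l with
  | nil => exact BoxLt_top
  | cons B l ih =>
    exact BoxLt_and (h B (List.mem_cons_self))
      (ih fun C hC => h C (List.mem_cons_of_mem _ hC))

lemma Linf_conjList {l : List Fm} (h : ∀ B ∈ l, Linf B) : Linf (conjList l) := by
  induction l with
  | nil => exact Linf.neg Linf.bot
  | cons B l ih =>
    exact Linf.and (h B (List.mem_cons_self))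
      (ih fun C hC => h C (List.mem_cons_of_mem _ hC))

/-- Conjunction of boxes implies box of conjunction (elementwise premises). -/
lemma conj_box (n : ℕ) (l : List (Fm × Fm))
    (h : ∀ p ∈ l, Prv KD4hAx (p.1.imp (Fm.box n p.2))) :
    Prv KD4hAx ((conjList (l.map Prod.fst)).imp
      (Fm.box n (conjList (l.map Prod.snd)))) := by
  induction l with
  | nil =>
    have htop : Prv KD4hAx Fm.top := by
      refine Prv.taut (Linf.neg Linf.bot) ?_
      intro v; simp [Fm.top, evalWith]
    have hb : Prv KD4hAx (Fm.box n Fm.top) := Prv.nec n htop BoxLt_top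
    show Prv KD4hAx (Fm.top.imp (Fm.box n Fm.top))
    refine mp1 (Linf.imp (Linf.neg Linf.bot) (KD4h_linf hb)) ?_ hb
    intro v; simp only [evalWith]; cases v (Fm.box n Fm.top) <;> simp
  | cons p l ih =>
    have h1 := h p (List.mem_cons_self)
    have ihl := ih fun q hq => h q (List.mem_cons_of_mem _ hq)
    obtain ⟨hB, hbA⟩ := Linf_imp_inv (KD4h_linf h1)
    obtain ⟨hC, hbQ⟩ := Linf_imp_inv (KD4h_linf ihl)
    have band := box_and hbA hbQ
    obtain ⟨hA', hAlt⟩ := Linf_box_inv hbA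
    obtain ⟨hQ', hQlt⟩ := Linf_box_inv hbQ
    have hR : Linf (Fm.box n ((p.2).and (conjList (l.map Prod.snd)))) :=
      Linf.box _ (Linf.and hA' hQ') (BoxLt_and hAlt hQlt)
    show Prv KD4hAx ((p.1.and (conjList (l.map Prod.fst))).imp
      (Fm.box n ((p.2).and (conjList (l.map Prod.snd)))))
    refine mp3 (Linf.imp (Linf.and hB hC) hR) ?_ h1 ihl band
    intro v
    simp only [evalWith]
    cases evalWith v p.1 <;>
      cases evalWith v (conjList (l.map Prod.fst)) <;>
      cases v (Fm.box n p.2) <;>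
      cases v (Fm.box n (conjList (l.map Prod.snd))) <;>
      cases v (Fm.box n ((p.2).and (conjList (l.map Prod.snd)))) <;> simp

end Aux

/-- `KD4_h` admits the rule `□Dh R`. -/
theorem KD4h_boxDR_admissible (n : ℕ) (S : List Fm) (G : List (ℕ × Fm))
    (hn : ∀ p ∈ G, p.1 < n)
    (hS : ∀ σ ∈ S, Linf (Fm.box n σ))
    (hG : ∀ p ∈ G, Linf (Fm.box p.1 p.2))
    (h : Prv KD4hAx
      ((conjList (S ++ G.map fun p => (p.2).and (Fm.box p.1 p.2))).imp Fm.bot)) :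
    Prv KD4hAx
      ((conjList (S.map (Fm.box n) ++ G.map fun p => Fm.box p.1 p.2)).imp Fm.bot) := by
  classical
  -- the combined list of (premise, conjunct) pairs
  set l : List (Fm × Fm) :=
    S.map (fun σ => (Fm.box n σ, σ)) ++
    G.map (fun p => (Fm.box p.1 p.2, (p.2).and (Fm.box p.1 p.2))) with hl
  have hfst : l.map Prod.fst = S.map (Fm.box n) ++ G.map fun p => Fm.box p.1 p.2 := by
    simp only [hl, List.map_append, List.map_map]; rfl
  have hsnd : l.map Prod.snd = S ++ G.map fun p => (p.2).and (Fm.box p.1 p.2) := by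
    simp only [hl, List.map_append, List.map_map, Function.comp_def, List.map_id']
  -- elementwise premises for `conj_box`
  have hElem : ∀ p ∈ l, Prv KD4hAx (p.1.imp (Fm.box n p.2)) := by
    intro p hp
    rw [hl] at hp
    rcases List.mem_append.1 hp with hp | hp
    · obtain ⟨σ, hσ, rfl⟩ := List.mem_map.1 hp
      exact prv_id (hS σ hσ)
    · obtain ⟨q, hq, rfl⟩ := List.mem_map.1 hp
      obtain ⟨m, γ⟩ := q
      have hqn : m < n := hn _ hq
      have hLq : Linf (Fm.box m γ) := hG _ hq
      obtain ⟨hγ, hγlt⟩ := Linf_box_inv hLq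
      -- □m γ → □n γ
      have h1 : Prv KD4hAx ((Fm.box m γ).imp (Fm.box n γ)) := boxUp hLq hqn.le
      -- □m γ → □n □m γ  (via axiom 4 then H)
      have four : Prv KD4hAx ((Fm.box m γ).imp (Fm.box (m+1) (Fm.box m γ))) :=
        Prv.ax (Or.inl (Or.inr (Or.inr ⟨γ, m, hLq, rfl⟩)))
      have hLq1 : Linf (Fm.box (m+1) (Fm.box m γ)) :=
        Linf.box _ hLq (BoxLt_box (hγlt.mono (Nat.le_succ _)) (Nat.lt_succ_self _))
      have h2 : Prv KD4hAx ((Fm.box m γ).imp (Fm.box n (Fm.box m γ))) :=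
        imp_trans four (boxUp hLq1 hqn)
      -- combine via box_and
      have hbnγ : Linf (Fm.box n γ) := Linf.box _ hγ (hγlt.mono hqn.le)
      have hbnb : Linf (Fm.box n (Fm.box m γ)) :=
        Linf.box _ hLq (BoxLt_box (hγlt.mono hqn.le) hqn)
      have band := box_and hbnγ hbnb
      have hR : Linf (Fm.box n (γ.and (Fm.box m γ))) :=
        Linf.box _ (Linf.and hγ hLq)
          (BoxLt_and (hγlt.mono hqn.le) (BoxLt_box (hγlt.mono hqn.le) hqn))
      refine mp3 (Linf.imp hLq hR) ?_ h1 h2 band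
      intro v
      simp only [evalWith]
      cases v (Fm.box m γ) <;> cases v (Fm.box n γ) <;>
        cases v (Fm.box n (Fm.box m γ)) <;>
        cases v (Fm.box n (γ.and (Fm.box m γ))) <;> simp
  -- conjunction of boxes implies the box of the conjunction
  have F1 : Prv KD4hAx ((conjList (l.map Prod.fst)).imp
      (Fm.box n (conjList (l.map Prod.snd)))) := conj_box n l hElem
  rw [hfst, hsnd] at F1
  set A0 : Fm := conjList (S ++ G.map fun p => (p.2).and (Fm.box p.1 p.2)) with hA0
  set C : Fm := conjList (S.map (Fm.box n) ++ G.map fun p => Fm.box p.1 p.2) with hC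
  -- necessitate h
  have hA0lt : BoxLt A0 n := by
    refine BoxLt_conjList ?_
    intro B hB
    rcases List.mem_append.1 hB with hB | hB
    · exact (Linf_box_inv (hS B hB)).2
    · obtain ⟨q, hq, rfl⟩ := List.mem_map.1 hB
      have hqn : q.1 < n := hn _ hq
      have hγlt := (Linf_box_inv (hG _ hq)).2
      exact BoxLt_and (hγlt.mono hqn.le) (BoxLt_box (hγlt.mono hqn.le) hqn)
  have hNec : Prv KD4hAx (Fm.box n (A0.imp Fm.bot)) :=
    Prv.nec n h (BoxLt_imp hA0lt BoxLt_bot)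
  -- K : □n(A0 → ⊥) → (□n A0 → □n ⊥)
  have hK : Prv KD4hAx ((Fm.box n (A0.imp Fm.bot)).imp
      ((Fm.box n A0).imp (Fm.box n Fm.bot))) :=
    Prv.ax (Or.inl (Or.inr (Or.inl ⟨A0, Fm.bot, n, KD4h_linf hNec, rfl⟩)))
  have hBoxBot : Prv KD4hAx ((Fm.box n A0).imp (Fm.box n Fm.bot)) := Prv.mp hK hNec
  -- D : ¬ □n ⊥
  have hD : Prv KD4hAx ((Fm.box n Fm.bot).neg) := Prv.ax (Or.inr ⟨n, rfl⟩)
  -- combine: C → A0box, A0box → □n⊥, ¬□n⊥ ⊢ C → ⊥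
  have hCL : Linf C := (Linf_imp_inv (KD4h_linf F1)).1
  refine mp3 (Linf.imp hCL Linf.bot) ?_ F1 hBoxBot hD
  intro v
  simp only [evalWith]
  cases evalWith v C <;> cases v (Fm.box n A0) <;> cases v (Fm.box n Fm.bot) <;> simp
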